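/- Let g : ℝ → ℝ, g(μ) = Σ_{l=1}^{L} χ̃_l²/(ε_l + μ)² with all χ̃_l ≠ 0 and ε₁ = min_l ε_l. On the interval I = [√(Σ_{l∈E} χ̃_l²) − ε₁, ‖χ̃‖₂ − ε₁], where E = {l : ε_l = ε₁}, there exists exactly one μ⋆ ∈ I with g(μ⋆) = 1, and for this μ⋆ all ε_l + μ⋆ > 0. -/

import Mathlib

open Finset

/-- On the interval `I = [√(Σ_{l∈E} χ̃_l²) − ε₁, ‖χ̃‖₂ − ε₁]`, with `E = {l : ε_l = ε₁}`,
the equation `g(μ) = Σ_l χ̃_l²/(ε_l + μ)² = 1` has exactly one solution `μ⋆`, and at this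
solution `ε_l + μ⋆ > 0` for all `l`. -/
theorem unique_mu_in_interval {L : ℕ} (hL : 0 < L) (ε χ : Fin L → ℝ)
    (hmin : ∀ l, ε ⟨0, hL⟩ ≤ ε l) (hχ : ∀ l, χ l ≠ 0) :
    (∃! μ : ℝ,
        μ ∈ Set.Icc
          (Real.sqrt (∑ l ∈ Finset.univ.filter (fun l => ε l = ε ⟨0, hL⟩), (χ l) ^ 2)
            - ε ⟨0, hL⟩)
          (Real.sqrt (∑ l : Fin L, (χ l) ^ 2) - ε ⟨0, hL⟩) ∧
        (∑ l : Fin L, (χ l) ^ 2 / (ε l + μ) ^ 2) = 1) ∧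
    (∀ μ : ℝ,
        μ ∈ Set.Icc
          (Real.sqrt (∑ l ∈ Finset.univ.filter (fun l => ε l = ε ⟨0, hL⟩), (χ l) ^ 2)
            - ε ⟨0, hL⟩)
          (Real.sqrt (∑ l : Fin L, (χ l) ^ 2) - ε ⟨0, hL⟩) →
        (∑ l : Fin L, (χ l) ^ 2 / (ε l + μ) ^ 2) = 1 →
        ∀ l, 0 < ε l + μ) := by
  set ε₀ := ε ⟨0, hL⟩ with hε₀
  set SE := ∑ l ∈ Finset.univ.filter (fun l => ε l = ε₀), (χ l) ^ 2 with hSE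
  set S := ∑ l : Fin L, (χ l) ^ 2 with hS
  have hSEpos : 0 < SE := by
    apply Finset.sum_pos
    · intro i _; exact pow_two_pos_of_ne_zero (hχ i)
    · exact ⟨⟨0, hL⟩, by simp [hε₀]⟩
  have hSES : SE ≤ S :=
    Finset.sum_le_sum_of_subset_of_nonneg (Finset.filter_subset _ _)
      (fun i _ _ => sq_nonneg _)
  have hSpos : 0 < S := lt_of_lt_of_le hSEpos hSES
  set a := Real.sqrt SE - ε₀ with ha
  set b := Real.sqrt S - ε₀ with hb
  have hab : a ≤ b := sub_le_sub_right (Real.sqrt_le_sqrt hSES) _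
  have hsE : 0 < Real.sqrt SE := Real.sqrt_pos.2 hSEpos
  have hsS : 0 < Real.sqrt S := Real.sqrt_pos.2 hSpos
  have hpos : ∀ μ ∈ Set.Icc a b, ∀ l, 0 < ε l + μ := by
    intro μ hμ l
    have h1 : a ≤ μ := hμ.1
    have h2 := hmin l
    have : ε₀ + a = Real.sqrt SE := by rw [ha]; ring
    linarith
  set g : ℝ → ℝ := fun μ => ∑ l : Fin L, (χ l) ^ 2 / (ε l + μ) ^ 2 with hg
  have hanti : StrictAntiOn g (Set.Icc a b) := by
    intro x hx y hy hxy
    apply Finset.sum_lt_sum_of_nonempty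
    · exact Finset.univ_nonempty_iff.2 ⟨⟨0, hL⟩⟩
    · intro i _
      have h1 : 0 < ε i + x := hpos x hx i
      have h2 : ε i + x < ε i + y := by linarith
      have hsq : (ε i + x) ^ 2 < (ε i + y) ^ 2 := by nlinarith
      exact div_lt_div_of_pos_left (pow_two_pos_of_ne_zero (hχ i)) (by positivity) hsq
  have hcont : ContinuousOn g (Set.Icc a b) := by
    apply continuousOn_finset_sum
    intro i _
    apply ContinuousOn.div continuousOn_const
    · exact ((continuous_const.add continuous_id).pow 2).continuousOn
    · intro x hx
      exact pow_ne_zero _ (hpos x hx i).ne'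
  have hga : 1 ≤ g a := by
    have hterm : ∀ l ∈ Finset.univ.filter (fun l => ε l = ε₀),
        (χ l) ^ 2 / SE = (χ l) ^ 2 / (ε l + a) ^ 2 := by
      intro l hl
      have hl' : ε l = ε₀ := (Finset.mem_filter.1 hl).2
      rw [hl']
      have : ε₀ + a = Real.sqrt SE := by rw [ha]; ring
      rw [this, Real.sq_sqrt hSEpos.le]
    have h1 : (1 : ℝ) = ∑ l ∈ Finset.univ.filter (fun l => ε l = ε₀),
        (χ l) ^ 2 / (ε l + a) ^ 2 := by
      rw [← Finset.sum_congr rfl hterm, ← Finset.sum_div, ← hSE,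
        div_self hSEpos.ne']
    rw [h1]
    apply Finset.sum_le_sum_of_subset_of_nonneg (Finset.filter_subset _ _)
    intro i _ _
    have := hpos a (Set.left_mem_Icc.2 hab) i
    positivity
  have hgb : g b ≤ 1 := by
    have h1 : g b ≤ ∑ l : Fin L, (χ l) ^ 2 / S := by
      apply Finset.sum_le_sum
      intro i _
      apply div_le_div_of_nonneg_left (sq_nonneg _) hSpos
      have h2 : ε₀ + b = Real.sqrt S := by rw [hb]; ring
      have h3 : Real.sqrt S ≤ ε i + b := by linarith [hmin i]
      calc S = Real.sqrt S ^ 2 := (Real.sq_sqrt hSpos.le).symm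
        _ ≤ (ε i + b) ^ 2 := by nlinarith
    rw [← Finset.sum_div, ← hS, div_self hSpos.ne'] at h1
    exact h1
  have hmem : (1 : ℝ) ∈ Set.Icc (g b) (g a) := ⟨hgb, hga⟩
  have hIVT := intermediate_value_Icc' hab hcont hmem
  obtain ⟨μ, hμI, hμ1⟩ := hIVT
  constructor
  · refine ⟨μ, ⟨hμI, hμ1⟩, ?_⟩
    intro ν ⟨hνI, hν1⟩
    exact hanti.injOn hνI hμI (hν1.trans hμ1.symm)
  · intro ν hνI _ l
    exact hpos ν hνI l
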